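/- Let G be a finite simple connected graph, let u ∈ V(G), and let G' be the graph obtained from G by attaching a new leaf vertex adjacent only to u. Then cdim(G') = cdim(G) + 1 if G forces a 𝟙 representation, and cdim(G') = cdim(G) otherwise. In particular, the value of cdim(G') does not depend on the choice of the attachment vertex u. -/

import Mathlib

open SimpleGraph

namespace ConnDim

open Classical in
/-- The local connectivity `κ(a,b)`: the maximum number of internally vertex-disjoint
`a`-`b` paths, with `κ(a,a) = ∞`. -/
noncomputable def localConn {V : Type*} (G : SimpleGraph V) (a b : V) : ℕ∞ :=
  if a = b then ⊤
  else sSup {n : ℕ∞ | ∃ Ps : Finset (G.Path a b),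
    (∀ p ∈ Ps, ∀ q ∈ Ps, p ≠ q → ∀ x : V,
        x ∈ p.1.support → x ∈ q.1.support → x = a ∨ x = b) ∧
    (Ps.card : ℕ∞) = n}

/-- A set `W` is connectivity resolving if vertices are determined by their
local connectivities to the elements of `W`. -/
def ConnResolving {V : Type*} (G : SimpleGraph V) (W : Set V) : Prop :=
  ∀ u v : V, (∀ w ∈ W, localConn G u w = localConn G v w) → u = v

/-- The connectivity dimension: minimum cardinality of a connectivity resolving set. -/
noncomputable def cdim {V : Type*} (G : SimpleGraph V) : ℕ :=
  sInf {n : ℕ | ∃ W : Set V, ConnResolving G W ∧ W.ncard = n}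

/-- A set `W` is metric resolving if vertices are determined by their distances
to the elements of `W`. -/
def MetricResolving {V : Type*} (G : SimpleGraph V) (W : Set V) : Prop :=
  ∀ u v : V, (∀ w ∈ W, G.dist u w = G.dist v w) → u = v

/-- The metric dimension: minimum cardinality of a metric resolving set. -/
noncomputable def mdim {V : Type*} (G : SimpleGraph V) : ℕ :=
  sInf {n : ℕ | ∃ W : Set V, MetricResolving G W ∧ W.ncard = n}

/-- `G` forces a `𝟙` representation if every minimum resolving set (basis) `B` admits a
vertex whose local connectivity to every element of `B` equals `1`. -/
def ForcesOne {V : Type*} (G : SimpleGraph V) : Prop :=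
  ∀ B : Set V, ConnResolving G B → B.ncard = cdim G →
    ∃ v : V, ∀ b ∈ B, localConn G v b = 1

/-- A cut vertex of a connected graph: its removal disconnects the graph. -/
def IsCutVertex {V : Type*} (G : SimpleGraph V) (v : V) : Prop :=
  G.Connected ∧ ¬ (G.induce {u : V | u ≠ v}).Connected

/-- A block of `G`: a maximal connected subgraph of `G` without a cut vertex of itself. -/
def IsBlock {V : Type*} (G : SimpleGraph V) (H : G.Subgraph) : Prop :=
  H.coe.Connected ∧ (∀ v, ¬ IsCutVertex H.coe v) ∧
  ∀ H' : G.Subgraph, H ≤ H' → H'.coe.Connected → (∀ v, ¬ IsCutVertex H'.coe v) → H' = H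

/-- The number of blocks of `G`. -/
noncomputable def numBlocks {V : Type*} (G : SimpleGraph V) : ℕ :=
  Nat.card {H : G.Subgraph // IsBlock G H}

/-- Two vertices are twins if they have the same neighborhood in the graph with
both of them deleted. -/
def AreTwins {V : Type*} (G : SimpleGraph V) (a b : V) : Prop :=
  ∀ x : V, x ≠ a → x ≠ b → (G.Adj a x ↔ G.Adj b x)

/-- The threshold graph generated by a binary sequence `L` (`false` = isolated vertex,
`true` = dominating vertex): two vertices are adjacent iff the later one was added
as a dominating vertex. -/
def thresholdGraph (L : List Bool) : SimpleGraph (Fin L.length) :=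
  SimpleGraph.fromRel (fun i j => i < j ∧ L.get j = true)

/-- The alternating binary sequence `0,1,0,1,…,0,1` of length `2 * n`. -/
def altList (n : ℕ) : List Bool := (List.replicate n [false, true]).flatten

/-- The join of two graphs on disjoint vertex sets by the bridge `v₁v₂`. -/
def bridgeJoin {V₁ V₂ : Type*} (G₁ : SimpleGraph V₁) (G₂ : SimpleGraph V₂)
    (v₁ : V₁) (v₂ : V₂) : SimpleGraph (V₁ ⊕ V₂) :=
  G₁.map Function.Embedding.inl ⊔ G₂.map Function.Embedding.inr
    ⊔ SimpleGraph.fromEdgeSet {s(Sum.inl v₁, Sum.inr v₂)}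

/-- The graph obtained from `G` by attaching a new leaf (the vertex `none`) to `u`. -/
def attachLeaf {V : Type*} (G : SimpleGraph V) (u : V) : SimpleGraph (Option V) :=
  G.map Function.Embedding.some ⊔ SimpleGraph.fromEdgeSet {s(some u, (none : Option V))}

/-- The chain of `t` triangles (triangle `i` has vertices `inl i.castSucc`, `inl i.succ`,
`inr (inl i)`), with a leaf `inr (inr ())` attached to the end vertex `inl 0`. -/
def triChain (t : ℕ) : SimpleGraph (Fin (t+1) ⊕ Fin t ⊕ Unit) :=
  SimpleGraph.fromRel (fun a b =>
    match a, b with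
    | Sum.inl i, Sum.inl j => (i : ℕ) + 1 = (j : ℕ)
    | Sum.inr (Sum.inl i), Sum.inl j => j = Fin.castSucc i ∨ j = Fin.succ i
    | Sum.inr (Sum.inr _), Sum.inl j => j = 0
    | _, _ => False)

section Aux

variable {V : Type*}

/-- The set of achievable numbers of pairwise internally disjoint `a`-`b` path systems. -/
def connSet (G : SimpleGraph V) (a b : V) : Set ℕ∞ :=
  {n : ℕ∞ | ∃ Ps : Finset (G.Path a b),
    (∀ p ∈ Ps, ∀ q ∈ Ps, p ≠ q → ∀ x : V,
        x ∈ p.1.support → x ∈ q.1.support → x = a ∨ x = b) ∧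
    (Ps.card : ℕ∞) = n}

lemma localConn_self (G : SimpleGraph V) (a : V) : localConn G a a = ⊤ := by
  unfold localConn
  rw [if_pos rfl]

lemma localConn_eq (G : SimpleGraph V) {a b : V} (h : a ≠ b) :
    localConn G a b = sSup (connSet G a b) := by
  unfold localConn
  rw [if_neg h]
  rfl

lemma one_mem_connSet {G : SimpleGraph V} {a b : V} (P : G.Path a b) :
    1 ∈ connSet G a b := by
  refine ⟨{P}, ?_, by simp⟩
  intro p hp q hq hpq
  simp only [Finset.mem_singleton] at hp hq
  exact absurd (hp.trans hq.symm) hpq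

lemma connSet_subset_comm (G : SimpleGraph V) (a b : V) :
    connSet G a b ⊆ connSet G b a := by
  classical
  rintro n ⟨Ps, hPs, rfl⟩
  have hrev : Function.Injective (fun p : G.Path a b => (⟨p.1.reverse, p.2.reverse⟩ : G.Path b a)) := by
    intro p q h
    simp only [Subtype.mk.injEq] at h
    exact Subtype.ext (SimpleGraph.Walk.reverse_injective h)
  refine ⟨Ps.image _, ?_, by rw [Finset.card_image_of_injective _ hrev]⟩
  intro p' hp' q' hq' hne x hxp hxq
  obtain ⟨p, hp, rfl⟩ := Finset.mem_image.mp hp'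
  obtain ⟨q, hq, rfl⟩ := Finset.mem_image.mp hq'
  simp only [SimpleGraph.Walk.support_reverse, List.mem_reverse] at hxp hxq
  exact (hPs p hp q hq (fun h => hne (by rw [h])) x hxp hxq).symm

lemma localConn_comm (G : SimpleGraph V) (a b : V) :
    localConn G a b = localConn G b a := by
  by_cases hab : a = b
  · subst hab; rfl
  · rw [localConn_eq G hab, localConn_eq G (Ne.symm hab)]
    congr 1
    exact le_antisymm (connSet_subset_comm G a b) (connSet_subset_comm G b a)

lemma localConn_le_card (G : SimpleGraph V) [Fintype V] {a b : V} (hab : a ≠ b) :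
    ∃ c : ℕ, localConn G a b ≤ (c : ℕ∞) := by
  classical
  rw [localConn_eq G hab]
  refine ⟨Fintype.card (G.Path a b), sSup_le ?_⟩
  rintro n ⟨Ps, -, rfl⟩
  exact_mod_cast Finset.card_le_univ Ps

lemma localConn_ne_top (G : SimpleGraph V) [Fintype V] {a b : V} (hab : a ≠ b) :
    localConn G a b ≠ ⊤ := by
  obtain ⟨c, hc⟩ := localConn_le_card G hab
  exact ((hc.trans_lt (WithTop.coe_lt_top c)).ne)

lemma resolving_univ (G : SimpleGraph V) [Fintype V] : ConnResolving G Set.univ := by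
  intro x y h
  by_contra hne
  have h1 := h x (Set.mem_univ x)
  rw [localConn_self] at h1
  exact localConn_ne_top G (Ne.symm hne) h1.symm

lemma exists_basis (G : SimpleGraph V) [Fintype V] :
    ∃ W : Set V, ConnResolving G W ∧ W.ncard = cdim G :=
  Nat.sInf_mem (⟨Set.univ.ncard, Set.univ, resolving_univ G, rfl⟩ :
    {n : ℕ | ∃ W : Set V, ConnResolving G W ∧ W.ncard = n}.Nonempty)

lemma cdim_le (G : SimpleGraph V) {W : Set V} (h : ConnResolving G W) :
    cdim G ≤ W.ncard :=
  Nat.sInf_le ⟨W, h, rfl⟩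

end Aux

section Leaf

variable {V : Type*} (G : SimpleGraph V) (u : V)

lemma attachLeaf_adj_some_some {a b : V} :
    (attachLeaf G u).Adj (some a) (some b) ↔ G.Adj a b := by
  simp [attachLeaf, Sym2.eq_iff, SimpleGraph.map_adj']
  exact fun h => h.ne

lemma attachLeaf_adj_none {z : Option V} :
    (attachLeaf G u).Adj none z ↔ z = some u := by
  simp only [attachLeaf]
  simp [Sym2.eq_iff, SimpleGraph.map_adj']
  rintro rfl
  simp

lemma attachLeaf_adj_none' {z : Option V} :
    (attachLeaf G u).Adj z none ↔ z = some u := by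
  rw [SimpleGraph.adj_comm]
  exact attachLeaf_adj_none G u

/-- The canonical homomorphism from `G` into `attachLeaf G u`. -/
def leafHom : G →g attachLeaf G u where
  toFun := some
  map_rel' := fun h => Or.inl ⟨by simpa using h.ne, _, _, h, rfl, rfl⟩

lemma leafHom_injective : Function.Injective (leafHom G u) :=
  Option.some_injective V

lemma none_not_mem_support :
    ∀ {x y : Option V} (P : (attachLeaf G u).Walk x y), P.IsPath → x ≠ none → y ≠ none →
      none ∉ P.support := by
  intro x y P
  induction P with
  | nil =>
    intro _ hx _
    simpa using Ne.symm hx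
  | @cons x z y h P ih =>
    intro hP hx hy hmem
    rw [SimpleGraph.Walk.support_cons, List.mem_cons] at hmem
    rcases hmem with hmem | hmem
    · exact hx hmem.symm
    · by_cases hz : z = none
      · subst hz
        have hxu : x = some u := (attachLeaf_adj_none' G u).mp h
        cases P with
        | nil => exact hy rfl
        | @cons _ w _ h' P'' =>
          have hwu : w = some u := (attachLeaf_adj_none G u).mp h'
          rw [SimpleGraph.Walk.cons_isPath_iff] at hP
          refine hP.2 ?_
          rw [SimpleGraph.Walk.support_cons]
          exact List.mem_cons_of_mem _ (by rw [hxu, ← hwu]; exact P''.start_mem_support)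
      · exact ih hP.of_cons hz hy hmem

lemma exists_preimage :
    ∀ {x y : Option V} (P : (attachLeaf G u).Walk x y), none ∉ P.support →
      ∀ (a b : V) (ha : x = some a) (hb : y = some b),
        ∃ Q : G.Walk a b, Q.map (leafHom G u) = P.copy ha hb := by
  intro x y P
  induction P with
  | nil =>
    intro _ a b ha hb
    subst ha
    obtain rfl : b = a := (Option.some_injective V hb.symm)
    exact ⟨SimpleGraph.Walk.nil, by rw [SimpleGraph.Walk.copy_nil]; rfl⟩
  | @cons x z y h P ih =>
    intro hn a b ha hb
    subst ha
    have hz : z ≠ none := by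
      intro hzn
      exact hn (by
        rw [SimpleGraph.Walk.support_cons]
        exact List.mem_cons_of_mem _ (hzn ▸ P.start_mem_support))
    obtain ⟨c, rfl⟩ := Option.ne_none_iff_exists'.mp hz
    have hac : G.Adj a c := (attachLeaf_adj_some_some G u).mp h
    have hn' : none ∉ P.support := fun hm => hn (by
      rw [SimpleGraph.Walk.support_cons]
      exact List.mem_cons_of_mem _ hm)
    obtain ⟨Q, hQ⟩ := ih hn' c b rfl hb
    refine ⟨SimpleGraph.Walk.cons hac Q, ?_⟩
    rw [SimpleGraph.Walk.map_cons, hQ, SimpleGraph.Walk.copy_cons]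
    rfl

lemma leafPath_surjective {a b : V} :
    Function.Surjective
      (SimpleGraph.Path.map (leafHom G u) (leafHom_injective G u) :
        G.Path a b → (attachLeaf G u).Path (some a) (some b)) := by
  intro p'
  have hnone : none ∉ p'.1.support :=
    none_not_mem_support G u p'.1 p'.2 (Option.some_ne_none a) (Option.some_ne_none b)
  obtain ⟨Q, hQ⟩ := exists_preimage G u p'.1 hnone a b rfl rfl
  replace hQ : Q.map (leafHom G u) = p'.1 := hQ
  have hQpath : Q.IsPath :=
    (SimpleGraph.Walk.map_isPath_iff_of_injective (leafHom_injective G u)).mp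
      (hQ ▸ p'.2)
  exact ⟨⟨Q, hQpath⟩, Subtype.ext hQ⟩

lemma connSet_attach (a b : V) :
    connSet (attachLeaf G u) (some a) (some b) = connSet G a b := by
  have hinj := SimpleGraph.Path.map_injective (leafHom_injective G u) a b
  let e : G.Path a b ≃ (attachLeaf G u).Path (some a) (some b) :=
    Equiv.ofBijective _ ⟨hinj, leafPath_surjective G u⟩
  have he : ∀ p : G.Path a b,
      (e p).1.support = p.1.support.map some := by
    intro p
    have h0 : e p = SimpleGraph.Path.map (leafHom G u) (leafHom_injective G u) p := rfl
    rw [h0]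
    exact SimpleGraph.Walk.support_map _ _
  classical
  apply Set.eq_of_subset_of_subset
  · rintro n ⟨Ps', hPs', rfl⟩
    refine ⟨Ps'.image e.symm, ?_, by rw [Finset.card_image_of_injective _ e.symm.injective]⟩
    intro p hp q hq hne x hxp hxq
    obtain ⟨p', hp', rfl⟩ := Finset.mem_image.mp hp
    obtain ⟨q', hq', rfl⟩ := Finset.mem_image.mp hq
    have hpq' : p' ≠ q' := fun h => hne (by rw [h])
    have hxp' : some x ∈ p'.1.support := by
      rw [← e.apply_symm_apply p', he]
      exact List.mem_map_of_mem hxp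
    have hxq' : some x ∈ q'.1.support := by
      rw [← e.apply_symm_apply q', he]
      exact List.mem_map_of_mem hxq
    rcases hPs' p' hp' q' hq' hpq' (some x) hxp' hxq' with h | h
    · exact Or.inl (Option.some_injective V h)
    · exact Or.inr (Option.some_injective V h)
  · rintro n ⟨Ps, hPs, rfl⟩
    refine ⟨Ps.image e, ?_, by rw [Finset.card_image_of_injective _ e.injective]⟩
    intro p' hp' q' hq' hne x hxp hxq
    obtain ⟨p, hp, rfl⟩ := Finset.mem_image.mp hp'
    obtain ⟨q, hq, rfl⟩ := Finset.mem_image.mp hq'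
    have hpq : p ≠ q := fun h => hne (by rw [h])
    rw [he] at hxp hxq
    obtain ⟨y, hy, hyx⟩ := List.mem_map.mp hxp
    obtain ⟨y', hy', hyy⟩ := List.mem_map.mp hxq
    have hyy' : y' = y := Option.some_injective V (hyy.trans hyx.symm)
    rw [hyy'] at hy'
    subst hyx
    rcases hPs p hp q hq hpq y hy hy' with h | h
    · exact Or.inl (by rw [h])
    · exact Or.inr (by rw [h])

lemma localConn_attach_some (a b : V) :
    localConn (attachLeaf G u) (some a) (some b) = localConn G a b := by
  by_cases hab : a = b
  · subst hab
    rw [localConn_self, localConn_self]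
  · rw [localConn_eq _ (fun h => hab (Option.some_injective V h)), localConn_eq _ hab,
      connSet_attach]

lemma some_u_mem_support {a : V} (P : (attachLeaf G u).Walk none (some a)) :
    some u ∈ P.support := by
  cases P with
  | @cons _ z _ h P' =>
    have hz : z = some u := (attachLeaf_adj_none G u).mp h
    rw [SimpleGraph.Walk.support_cons]
    exact List.mem_cons_of_mem _ (hz ▸ P'.start_mem_support)

lemma path_none_some_u_unique (p q : (attachLeaf G u).Path none (some u)) : p = q := by
  have key : ∀ r : (attachLeaf G u).Path none (some u),
      ∃ h : (attachLeaf G u).Adj none (some u), r.1 = SimpleGraph.Walk.cons h SimpleGraph.Walk.nil := by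
    rintro ⟨r, hr⟩
    cases r with
    | @cons _ z _ h P' =>
      obtain rfl : z = some u := (attachLeaf_adj_none G u).mp h
      rw [SimpleGraph.Walk.cons_isPath_iff] at hr
      have : P' = SimpleGraph.Walk.nil := (SimpleGraph.Walk.isPath_iff_eq_nil (p := P')).mp hr.1
      subst this
      exact ⟨h, rfl⟩
  obtain ⟨h1, e1⟩ := key p
  obtain ⟨h2, e2⟩ := key q
  exact Subtype.ext (by rw [e1, e2])

lemma localConn_none_some (hG : G.Connected) (a : V) :
    localConn (attachLeaf G u) none (some a) = 1 := by
  classical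
  have hne : (none : Option V) ≠ some a := by simp
  rw [localConn_eq _ hne]
  apply le_antisymm
  · apply sSup_le
    rintro n ⟨Ps, hPs, rfl⟩
    have hcard : Ps.card ≤ 1 := by
      by_contra hlt
      obtain ⟨p, hp, q, hq, hpq⟩ := Finset.one_lt_card.mp (Nat.lt_of_not_le hlt)
      by_cases hau : a = u
      · subst hau
        exact hpq (path_none_some_u_unique G _ p q)
      · rcases hPs p hp q hq hpq (some u) (some_u_mem_support G u p.1)
          (some_u_mem_support G u q.1) with h | h
        · exact absurd h (by simp)
        · exact hau (Option.some_injective V h).symm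
    exact_mod_cast hcard
  · apply le_sSup
    obtain ⟨w⟩ := hG.preconnected u a
    let Q : G.Path u a := w.toPath
    have hQ' : ((Q.1.map (leafHom G u))).IsPath :=
      SimpleGraph.Walk.map_isPath_of_injective (leafHom_injective G u) Q.2
    have hadj : (attachLeaf G u).Adj none (some u) := (attachLeaf_adj_none G u).mpr rfl
    have hnmem : (none : Option V) ∉ (Q.1.map (leafHom G u)).support := by
      rw [SimpleGraph.Walk.support_map]
      intro hmem
      obtain ⟨y, -, hy⟩ := List.mem_map.mp hmem
      exact (by simp : (some y : Option V) ≠ none) hy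
    exact one_mem_connSet ⟨SimpleGraph.Walk.cons hadj (Q.1.map (leafHom G u)),
      (SimpleGraph.Walk.cons_isPath_iff _ _).mpr ⟨hQ', hnmem⟩⟩

lemma localConn_some_none (hG : G.Connected) (a : V) :
    localConn (attachLeaf G u) (some a) none = 1 := by
  rw [localConn_comm]
  exact localConn_none_some G u hG a

end Leaf

section Main

variable {V : Type*} [Fintype V]

/-- The preimage of a resolving set of `attachLeaf G u` resolves `G`. -/
lemma preimage_resolving (G : SimpleGraph V) (u : V) (hG : G.Connected)
    {W' : Set (Option V)} (hW' : ConnResolving (attachLeaf G u) W') :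
    ConnResolving G {v : V | some v ∈ W'} := by
  intro x y h
  have := hW' (some x) (some y) ?_
  · exact Option.some_injective V this
  · intro w' hw'
    match w' with
    | none =>
      rw [localConn_some_none G u hG, localConn_some_none G u hG]
    | some w =>
      rw [localConn_attach_some, localConn_attach_some]
      exact h w hw'

lemma cdim_le_cdim_attach (G : SimpleGraph V) (u : V) (hG : G.Connected) :
    cdim G ≤ cdim (attachLeaf G u) := by
  obtain ⟨W', hW', hcard⟩ := exists_basis (attachLeaf G u)
  have hres := preimage_resolving G u hG hW'
  refine (cdim_le G hres).trans ?_
  rw [← hcard]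
  rw [← Set.ncard_image_of_injective {v : V | some v ∈ W'} (Option.some_injective V)]
  apply Set.ncard_le_ncard _ W'.toFinite
  rintro _ ⟨v, hv, rfl⟩
  exact hv

lemma cdim_attach_le_succ (G : SimpleGraph V) (u : V) (hG : G.Connected) :
    cdim (attachLeaf G u) ≤ cdim G + 1 := by
  obtain ⟨B, hB, hcard⟩ := exists_basis G
  have hres : ConnResolving (attachLeaf G u) (insert none (some '' B)) := by
    intro x y h
    match x, y with
    | some a, some b =>
      have : a = b := by
        apply hB
        intro w hw
        have := h (some w) (Set.mem_insert_of_mem _ ⟨w, hw, rfl⟩)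
        rwa [localConn_attach_some, localConn_attach_some] at this
      rw [this]
    | some a, none =>
      have := h none (Set.mem_insert _ _)
      rw [localConn_some_none G u hG, localConn_self] at this
      exact absurd this (by simp)
    | none, some b =>
      have := h none (Set.mem_insert _ _)
      rw [localConn_some_none G u hG, localConn_self] at this
      exact absurd this.symm (by simp)
    | none, none => rfl
  refine (cdim_le _ hres).trans ?_
  rw [Set.ncard_insert_of_notMem (by rintro ⟨v, -, h⟩; exact (by simp : (some v : Option V) ≠ none) h),
    Set.ncard_image_of_injective _ (Option.some_injective V), hcard]

lemma cdim_attach_ne (G : SimpleGraph V) (u : V) (hG : G.Connected) (hF : ForcesOne G) :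
    cdim (attachLeaf G u) ≠ cdim G := by
  intro heq
  obtain ⟨W', hW', hcard⟩ := exists_basis (attachLeaf G u)
  rw [heq] at hcard
  have hres := preimage_resolving G u hG hW'
  by_cases hnone : none ∈ W'
  · -- replacing `none` shows a smaller resolving set of `G`, contradiction
    have himg : some '' {v : V | some v ∈ W'} = W' \ {none} := by
      apply Set.eq_of_subset_of_subset
      · rintro _ ⟨v, hv, rfl⟩
        exact ⟨hv, by simp⟩
      · rintro w' ⟨hw', hne⟩
        match w' with
        | none => exact absurd rfl hne
        | some v => exact ⟨v, hw', rfl⟩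
    have h1 : ({v : V | some v ∈ W'} : Set V).ncard = cdim G - 1 := by
      rw [← Set.ncard_image_of_injective _ (Option.some_injective V), himg,
        Set.ncard_diff_singleton_of_mem hnone, hcard]
    have h2 : 1 ≤ cdim G := by
      rw [← hcard]
      exact (Set.ncard_pos W'.toFinite).mpr ⟨none, hnone⟩
    have h3 := cdim_le G hres
    rw [h1] at h3
    omega
  · have himg : some '' {v : V | some v ∈ W'} = W' := by
      apply Set.eq_of_subset_of_subset
      · rintro _ ⟨v, hv, rfl⟩
        exact hv
      · intro w' hw'
        match w' with
        | none => exact absurd hw' hnone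
        | some v => exact ⟨v, hw', rfl⟩
    have h1 : ({v : V | some v ∈ W'} : Set V).ncard = cdim G := by
      rw [← Set.ncard_image_of_injective _ (Option.some_injective V), himg, hcard]
    obtain ⟨v, hv⟩ := hF _ hres h1
    have : some v = none := by
      apply hW'
      intro w' hw'
      match w' with
      | none => exact absurd hw' hnone
      | some w =>
        rw [localConn_attach_some, localConn_none_some G u hG, hv w hw']
    exact (by simp : (some v : Option V) ≠ none) this

lemma cdim_attach_le_of_not (G : SimpleGraph V) (u : V) (hG : G.Connected)
    (hF : ¬ ForcesOne G) : cdim (attachLeaf G u) ≤ cdim G := by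
  rw [ForcesOne] at hF
  push_neg at hF
  obtain ⟨B, hB, hcard, hno⟩ := hF
  have hres : ConnResolving (attachLeaf G u) (some '' B) := by
    intro x y h
    match x, y with
    | some a, some b =>
      have : a = b := by
        apply hB
        intro w hw
        have := h (some w) ⟨w, hw, rfl⟩
        rwa [localConn_attach_some, localConn_attach_some] at this
      rw [this]
    | some a, none =>
      obtain ⟨b, hb, hne⟩ := hno a
      have := h (some b) ⟨b, hb, rfl⟩
      rw [localConn_attach_some, localConn_none_some G u hG] at this
      exact absurd this hne
    | none, some a =>
      obtain ⟨b, hb, hne⟩ := hno a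
      have := h (some b) ⟨b, hb, rfl⟩
      rw [localConn_attach_some, localConn_none_some G u hG] at this
      exact absurd this.symm hne
    | none, none => rfl
  refine (cdim_le _ hres).trans ?_
  rw [Set.ncard_image_of_injective _ (Option.some_injective V), hcard]

lemma cdim_attach (G : SimpleGraph V) (hG : G.Connected) (u : V) :
    (ForcesOne G → cdim (attachLeaf G u) = cdim G + 1) ∧
    (¬ ForcesOne G → cdim (attachLeaf G u) = cdim G) := by
  constructor
  · intro hF
    have h1 := cdim_le_cdim_attach G u hG
    have h2 := cdim_attach_le_succ G u hG
    have h3 := cdim_attach_ne G u hG hF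
    omega
  · intro hF
    exact le_antisymm (cdim_attach_le_of_not G u hG hF) (cdim_le_cdim_attach G u hG)

end Main

/-- attaching a leaf to a connected graph `G` increases `cdim` by one if `G`
forces a `𝟙` representation and leaves it unchanged otherwise; in particular the value
does not depend on the attachment vertex. -/
theorem stmt15 {V : Type*} [Fintype V] (G : SimpleGraph V) (hG : G.Connected) (u : V) :
    (ForcesOne G → cdim (attachLeaf G u) = cdim G + 1) ∧
    (¬ ForcesOne G → cdim (attachLeaf G u) = cdim G) ∧
    (∀ u' : V, cdim (attachLeaf G u') = cdim (attachLeaf G u)) := by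
  refine ⟨(cdim_attach G hG u).1, (cdim_attach G hG u).2, fun u' => ?_⟩
  by_cases hF : ForcesOne G
  · rw [(cdim_attach G hG u').1 hF, (cdim_attach G hG u).1 hF]
  · rw [(cdim_attach G hG u').2 hF, (cdim_attach G hG u).2 hF]

end ConnDim
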